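/- For t ∈ ℝ, let v(t) be the 9×9 real matrix whose only nonzero entries are v₁₂ = t, v₂₁ = -t, v₂₃ = 1, v₃₂ = -1, v₄₅ = 1, v₅₄ = -1, v₆₇ = 1, v₇₆ = -1, v₈₉ = 1, v₉₈ = -1. Then for every t ≠ 0, every real number c, and every invertible 9×9 real matrix P, one has P·v(t)·P⁻¹ ≠ c·v(0). In other words, for t ≠ 0 the antisymmetric matrix v(t) is not similar to any real scalar multiple of v(0). -/
import Mathlib


open Matrix

/-- For `t : ℝ`, let `v t` be the `9×9` real antisymmetric matrix whose only nonzero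
entries are `v₁₂ = t`, `v₂₁ = -t`, `v₂₃ = 1`, `v₃₂ = -1`, `v₄₅ = 1`, `v₅₄ = -1`,
`v₆₇ = 1`, `v₇₆ = -1`, `v₈₉ = 1`, `v₉₈ = -1`.  For every `t ≠ 0`, every real `c` and
every invertible real `9×9` matrix `P`, one has `P * v t * P⁻¹ ≠ c • v 0`: the matrix
`v t` is not similar to any real scalar multiple of `v 0`. -/
theorem spin9_family_not_conjugate
    (v : ℝ → Matrix (Fin 9) (Fin 9) ℝ)
    (hv : ∀ t : ℝ, v t =
      !![0,  t, 0, 0, 0, 0, 0, 0, 0;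
         -t, 0, 1, 0, 0, 0, 0, 0, 0;
         0, -1, 0, 0, 0, 0, 0, 0, 0;
         0,  0, 0, 0, 1, 0, 0, 0, 0;
         0,  0, 0,-1, 0, 0, 0, 0, 0;
         0,  0, 0, 0, 0, 0, 1, 0, 0;
         0,  0, 0, 0, 0,-1, 0, 0, 0;
         0,  0, 0, 0, 0, 0, 0, 0, 1;
         0,  0, 0, 0, 0, 0, 0,-1, 0]) :
    ∀ t : ℝ, t ≠ 0 → ∀ c : ℝ, ∀ P : Matrix (Fin 9) (Fin 9) ℝ,
      IsUnit P → P * v t * P⁻¹ ≠ c • v 0 := by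
  -- trace invariants distinguish the conjugacy classes
  have tr2 : ∀ t : ℝ, (v t * v t).trace = -2*t^2 - 8 := by
    intro t
    rw [hv t]
    simp [Matrix.trace, Matrix.diag, Matrix.mul_apply, Fin.sum_univ_succ]
    ring
  have tr4 : ∀ t : ℝ, ((v t * v t) * (v t * v t)).trace = 2*t^4 + 4*t^2 + 8 := by
    intro t
    rw [hv t]
    simp [Matrix.trace, Matrix.diag, Matrix.mul_apply, Fin.sum_univ_succ]
    ring
  intro t ht c P hP h
  have hdet : IsUnit P.det := (Matrix.isUnit_iff_isUnit_det P).mp hP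
  have hinv : P⁻¹ * P = 1 := Matrix.nonsing_inv_mul P hdet
  have conj : ∀ A B : Matrix (Fin 9) (Fin 9) ℝ,
      (P * A * P⁻¹) * (P * B * P⁻¹) = P * (A * B) * P⁻¹ := by
    intro A B
    have cancel : ∀ X : Matrix (Fin 9) (Fin 9) ℝ, P⁻¹ * (P * X) = X := by
      intro X
      rw [← Matrix.mul_assoc, hinv, Matrix.one_mul]
    simp only [Matrix.mul_assoc, cancel]
  have htr : ∀ B : Matrix (Fin 9) (Fin 9) ℝ, (P * B * P⁻¹).trace = B.trace := by
    intro B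
    rw [Matrix.trace_mul_cycle, hinv, Matrix.one_mul]
  have h2 : P * (v t * v t) * P⁻¹ = (c * c) • (v 0 * v 0) := by
    rw [← conj, h, Matrix.smul_mul, Matrix.mul_smul, smul_smul]
  have h4 : P * ((v t * v t) * (v t * v t)) * P⁻¹
      = ((c * c) * (c * c)) • ((v 0 * v 0) * (v 0 * v 0)) := by
    rw [← conj, h2, Matrix.smul_mul, Matrix.mul_smul, smul_smul]
  have e2 : (v t * v t).trace = (c * c) * (v 0 * v 0).trace := by
    rw [← htr (v t * v t), h2, Matrix.trace_smul, smul_eq_mul]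
  have e4 : ((v t * v t) * (v t * v t)).trace
      = ((c * c) * (c * c)) * ((v 0 * v 0) * (v 0 * v 0)).trace := by
    rw [← htr ((v t * v t) * (v t * v t)), h4, Matrix.trace_smul, smul_eq_mul]
  rw [tr2 t, tr2 0] at e2
  rw [tr4 t, tr4 0] at e4
  have ht2 : t^2 > 0 := by positivity
  nlinarith [sq_nonneg t, sq_nonneg c, sq_nonneg (t*t), e2, e4]
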